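/- Let p ≥ 1 be a natural number and consider V_{2p} with the SU(2)-action ρ_{2p}. Then (i) the subspace of f ∈ V_{2p} with ρ_{2p}(diag(λ, λ̄))f = f for all complex λ with |λ| = 1 equals the one-dimensional span ℂ·z₀^p z₁^p; (ii) ρ_{2p}(J)(z₀^p z₁^p) = (−1)^p·z₀^p z₁^p for J := [[0,1],[−1,0]]; consequently the subspace of V_{2p} fixed by the subgroup generated by the diagonal torus and J equals ℂ·z₀^p z₁^p when p is even, and {0} when p is odd. -/

import Mathlib

/-!
STATEMENT 17: In V_{2p} under ρ_{2p}: (i) the vectors fixed by all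
ρ_{2p}(diag(λ,λ̄)), |λ| = 1, form the line ℂ·z₀^p z₁^p;
(ii) ρ_{2p}(J)(z₀^p z₁^p) = (−1)^p z₀^p z₁^p; hence the subspace fixed by the
subgroup generated by the torus and J is ℂ·z₀^p z₁^p for p even and {0} for p odd.
-/

open MvPolynomial

noncomputable section

abbrev Mat2 : Type := Matrix (Fin 2) (Fin 2) ℂ

abbrev P2 : Type := MvPolynomial (Fin 2) ℂ

/-- The substitution action `(ρ(g) f)(z₀,z₁) = f((z₀,z₁)g)`. -/
def polyAct (g : Mat2) : P2 →ₗ[ℂ] P2 :=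
  (MvPolynomial.aeval
    (fun j : Fin 2 => ∑ i : Fin 2, MvPolynomial.C (g i j) * MvPolynomial.X i) :
      P2 →ₐ[ℂ] P2).toLinearMap

def Jmat : Mat2 := !![0, 1; -1, 0]

/-- The torus element diag(λ, λ̄). -/
def dmat (lam : ℂ) : Mat2 := !![lam, 0; 0, (starRingEnd ℂ) lam]

lemma polyAct_dmat_monomial (lam : ℂ) (d : Fin 2 →₀ ℕ) (a : ℂ) :
    polyAct (dmat lam) (monomial d a)
      = monomial d (lam ^ d 0 * (starRingEnd ℂ) lam ^ d 1 * a) := by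
  have h0 : (∑ i : Fin 2, C (dmat lam i 0) * X i : P2) = C lam * X 0 := by
    simp [dmat, Fin.sum_univ_two]
  have h1 : (∑ i : Fin 2, C (dmat lam i 1) * X i : P2) = C ((starRingEnd ℂ) lam) * X 1 := by
    simp [dmat, Fin.sum_univ_two]
  simp only [polyAct, AlgHom.toLinearMap_apply, aeval_monomial]
  rw [Finsupp.prod_fintype _ _ (fun i => pow_zero _), Fin.prod_univ_two, h0, h1,
    monomial_eq, Finsupp.prod_fintype _ _ (fun i => pow_zero _), Fin.prod_univ_two,
    mul_pow, mul_pow, ← C_pow, ← C_pow, algebraMap_eq]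
  rw [C_mul, C_mul]
  ring

lemma polyAct_J (p : ℕ) :
    polyAct Jmat (X 0 ^ p * X 1 ^ p : P2) = ((-1 : ℂ) ^ p) • (X 0 ^ p * X 1 ^ p : P2) := by
  have h0 : (∑ i : Fin 2, C (Jmat i 0) * X i : P2) = -X 1 := by
    simp [Jmat, Fin.sum_univ_two]
  have h1 : (∑ i : Fin 2, C (Jmat i 1) * X i : P2) = X 0 := by
    simp [Jmat, Fin.sum_univ_two]
  simp only [polyAct, AlgHom.toLinearMap_apply, map_mul, map_pow, aeval_X, h0, h1]
  rw [neg_pow, smul_eq_C_mul]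
  rw [map_pow, map_neg, map_one]
  ring

lemma coeff_polyAct_dmat (lam : ℂ) (f : P2) (d : Fin 2 →₀ ℕ) :
    coeff d (polyAct (dmat lam) f)
      = lam ^ d 0 * (starRingEnd ℂ) lam ^ d 1 * coeff d f := by
  induction f using MvPolynomial.induction_on' with
  | monomial d' a =>
      rw [polyAct_dmat_monomial, coeff_monomial, coeff_monomial]
      split_ifs with h
      · subst h; rfl
      · ring
  | add q r hq hr =>
      rw [map_add, coeff_add, coeff_add, hq, hr]; ring

lemma exp_aux (p : ℕ) (hp : 1 ≤ p) (d0 d1 : ℕ) (hsum : d0 + d1 = 2 * p)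
    (h : Complex.exp ((Real.pi / (2 * p + 1) : ℝ) * Complex.I) ^ d0 *
      (starRingEnd ℂ) (Complex.exp ((Real.pi / (2 * p + 1) : ℝ) * Complex.I)) ^ d1 = 1) :
    d0 = d1 := by
  set θ : ℝ := Real.pi / (2 * p + 1) with hθ
  have hc : (starRingEnd ℂ) (Complex.exp ((θ:ℝ) * Complex.I)) =
      Complex.exp (((-θ : ℝ) : ℂ) * Complex.I) := by
    rw [← Complex.exp_conj, map_mul, Complex.conj_ofReal, Complex.conj_I]
    push_cast
    ring_nf
  rw [hc, ← Complex.exp_nat_mul, ← Complex.exp_nat_mul, ← Complex.exp_add,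
    Complex.exp_eq_one_iff] at h
  obtain ⟨n, hn⟩ := h
  have hn' : ((((d0 : ℝ) - d1) * θ : ℝ) : ℂ) * Complex.I = ((n * (2 * Real.pi) : ℝ) : ℂ) * Complex.I := by
    rw [show ((n * (2 * Real.pi) : ℝ) : ℂ) * Complex.I
        = (n : ℂ) * (2 * (Real.pi : ℂ) * Complex.I) by push_cast; ring, ← hn]
    push_cast
    ring
  have hre : ((d0 : ℝ) - d1) * θ = n * (2 * Real.pi) :=
    Complex.ofReal_inj.mp (mul_right_cancel₀ Complex.I_ne_zero hn')
  -- deduce (d0 : ℤ) - d1 = 2 * n * (2p+1)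
  have hpi : (Real.pi : ℝ) ≠ 0 := Real.pi_ne_zero
  have hden : (2 * (p:ℝ) + 1) ≠ 0 := by positivity
  have hk : ((d0 : ℝ) - d1) = 2 * n * (2 * p + 1) := by
    rw [hθ] at hre
    field_simp at hre
    linear_combination hre
  have hk' : (d0 : ℤ) - d1 = 2 * n * (2 * p + 1) := by exact_mod_cast hk
  have habs : |(d0 : ℤ) - d1| ≤ 2 * p := by
    rw [abs_sub_le_iff]
    constructor <;> omega
  have hn0 : n = 0 := by
    by_contra hn0
    have : (2 * p + 1 : ℤ) ≤ |(d0 : ℤ) - d1| := by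
      rw [hk', abs_mul, abs_mul]
      have h1 : (1:ℤ) ≤ |n| := Int.one_le_abs (by exact_mod_cast hn0)
      have h2 : |(2 * (p:ℤ) + 1)| = 2 * p + 1 := abs_of_nonneg (by positivity)
      have h3 : |(2:ℤ)| = 2 := by norm_num
      rw [h2, h3]
      nlinarith
    omega
  rw [hn0] at hk'
  omega

def dpF (p : ℕ) : Fin 2 →₀ ℕ := Finsupp.single 0 p + Finsupp.single 1 p

lemma dpF_0 (p : ℕ) : dpF p 0 = p := by simp [dpF]
lemma dpF_1 (p : ℕ) : dpF p 1 = p := by simp [dpF]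

lemma m_eq (p : ℕ) : (X 0 ^ p * X 1 ^ p : P2) = monomial (dpF p) 1 := by
  rw [X_pow_eq_monomial, X_pow_eq_monomial, monomial_mul, one_mul, dpF]

lemma m_ne_zero (p : ℕ) : (X 0 ^ p * X 1 ^ p : P2) ≠ 0 := by
  rw [m_eq]
  intro h
  have := congrArg (coeff (dpF p)) h
  simp [coeff_monomial] at this

lemma m_mem_hom (p : ℕ) :
    (X 0 ^ p * X 1 ^ p : P2) ∈ homogeneousSubmodule (Fin 2) ℂ (2 * p) := by
  rw [mem_homogeneousSubmodule, two_mul]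
  exact (isHomogeneous_X_pow (0 : Fin 2) p).mul (isHomogeneous_X_pow (1 : Fin 2) p)

lemma torus_fixed (p : ℕ) (c : ℂ) (lam : ℂ) (hlam : ‖lam‖ = 1) :
    polyAct (dmat lam) (c • (X 0 ^ p * X 1 ^ p : P2)) = c • (X 0 ^ p * X 1 ^ p : P2) := by
  rw [m_eq, map_smul, polyAct_dmat_monomial, dpF_0, dpF_1, mul_one, ← mul_pow,
    Complex.mul_conj, Complex.normSq_eq_norm_sq, hlam]
  norm_num

lemma weight_one_fin2 (d : Fin 2 →₀ ℕ) : (Finsupp.weight 1 d : ℕ) = d 0 + d 1 := by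
  rw [show (Finsupp.weight 1 : (Fin 2 →₀ ℕ) →+ ℕ) = Finsupp.weight (fun _ => 1) from rfl,
    ← Finsupp.degree_eq_weight_one, Finsupp.degree_apply,
    Finset.sum_subset (Finset.subset_univ d.support)
      (fun i _ h => Finsupp.notMem_support_iff.mp h), Fin.sum_univ_two]

lemma char_i (p : ℕ) (hp : 1 ≤ p) :
    ({f : P2 | f ∈ MvPolynomial.homogeneousSubmodule (Fin 2) ℂ (2 * p) ∧
        ∀ lam : ℂ, ‖lam‖ = 1 → polyAct (dmat lam) f = f}
      = Set.range (fun c : ℂ => c • (X 0 ^ p * X 1 ^ p : P2))) := by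
  ext f
  constructor
  · rintro ⟨hhom, hfix⟩
    refine ⟨coeff (dpF p) f, ?_⟩
    rw [m_eq]
    ext d
    rw [coeff_smul, coeff_monomial, smul_eq_mul, mul_ite, mul_one, mul_zero]
    split_ifs with hd
    · rw [hd]
    · -- show coeff d f = 0
      by_contra hne
      have hne := Ne.symm hne
      have hw : d 0 + d 1 = 2 * p := by
        have := ((mem_homogeneousSubmodule _ f).mp hhom) hne
        rwa [weight_one_fin2] at this
      have hd01 : d 0 ≠ d 1 := by
        intro hEq
        apply hd
        have h0 : d 0 = p := by omega
        have h1 : d 1 = p := by omega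
        ext i
        fin_cases i
        · show dpF p 0 = d 0; rw [dpF_0]; exact h0.symm
        · show dpF p 1 = d 1; rw [dpF_1]; exact h1.symm
      set lam : ℂ := Complex.exp ((Real.pi / (2 * p + 1) : ℝ) * Complex.I) with hlam
      have habs : ‖lam‖ = 1 := Complex.norm_exp_ofReal_mul_I _
      have hcoef := congrArg (coeff d) (hfix lam habs)
      rw [coeff_polyAct_dmat] at hcoef
      have hunit : lam ^ d 0 * (starRingEnd ℂ) lam ^ d 1 = 1 := by
        have := mul_right_cancel₀ hne (hcoef.trans (one_mul (coeff d f)).symm)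
        exact this
      exact hd01 (exp_aux p hp (d 0) (d 1) hw hunit)
  · rintro ⟨c, rfl⟩
    exact ⟨Submodule.smul_mem _ _ (m_mem_hom p), fun lam hlam => torus_fixed p c lam hlam⟩

theorem statement17 (p : ℕ) (hp : 1 ≤ p) :
    ({f : P2 | f ∈ MvPolynomial.homogeneousSubmodule (Fin 2) ℂ (2 * p) ∧
        ∀ lam : ℂ, ‖lam‖ = 1 → polyAct (dmat lam) f = f}
      = Set.range (fun c : ℂ => c • (X 0 ^ p * X 1 ^ p : P2))) ∧
    polyAct Jmat (X 0 ^ p * X 1 ^ p : P2) = ((-1 : ℂ) ^ p) • (X 0 ^ p * X 1 ^ p : P2) ∧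
    (Even p →
      {f : P2 | f ∈ MvPolynomial.homogeneousSubmodule (Fin 2) ℂ (2 * p) ∧
          (∀ lam : ℂ, ‖lam‖ = 1 → polyAct (dmat lam) f = f) ∧
          polyAct Jmat f = f}
        = Set.range (fun c : ℂ => c • (X 0 ^ p * X 1 ^ p : P2))) ∧
    (Odd p →
      {f : P2 | f ∈ MvPolynomial.homogeneousSubmodule (Fin 2) ℂ (2 * p) ∧
          (∀ lam : ℂ, ‖lam‖ = 1 → polyAct (dmat lam) f = f) ∧
          polyAct Jmat f = f}
        = {0}) := by
  refine ⟨char_i p hp, polyAct_J p, ?_, ?_⟩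
  · intro hpe
    ext f
    constructor
    · rintro ⟨hhom, hfix, _⟩
      have : f ∈ ({f : P2 | f ∈ MvPolynomial.homogeneousSubmodule (Fin 2) ℂ (2 * p) ∧
          ∀ lam : ℂ, ‖lam‖ = 1 → polyAct (dmat lam) f = f}) := ⟨hhom, hfix⟩
      rwa [char_i p hp] at this
    · rintro ⟨c, rfl⟩
      refine ⟨Submodule.smul_mem _ _ (m_mem_hom p), fun lam hlam => torus_fixed p c lam hlam, ?_⟩
      rw [map_smul, polyAct_J p, hpe.neg_one_pow, one_smul]
  · intro hpo
    ext f
    simp only [Set.mem_setOf_eq, Set.mem_singleton_iff]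
    constructor
    · rintro ⟨hhom, hfix, hJ⟩
      have : f ∈ ({f : P2 | f ∈ MvPolynomial.homogeneousSubmodule (Fin 2) ℂ (2 * p) ∧
          ∀ lam : ℂ, ‖lam‖ = 1 → polyAct (dmat lam) f = f}) := ⟨hhom, hfix⟩
      rw [char_i p hp] at this
      obtain ⟨c, rfl⟩ := this
      rw [map_smul, polyAct_J p, hpo.neg_one_pow, smul_smul] at hJ
      have hc : c * -1 = c := by
        by_contra hne
        exact hne (smul_left_injective ℂ (m_ne_zero p) hJ)
      have : c = 0 := by
        have := hc
        linear_combination (-(1:ℂ)/2) * hc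
      simp only [this, zero_smul]
    · rintro rfl
      exact ⟨Submodule.zero_mem _, fun lam _ => map_zero _, map_zero _⟩

end
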